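/- If allotments A and B have equal loads at every service center and the total cost of B is strictly less than that of A, then the allotment subspace multigraph Γ(A) contains a directed cycle of negative total weight. -/

import Mathlib

lemma finRotate_val_aux {m : ℕ} (i : Fin m) :
    ((finRotate m i : Fin m) : ℕ) = ((i : ℕ) + 1) % m := by
  cases m with
  | zero => exact i.elim0
  | succ k =>
    rw [finRotate_succ_apply, Fin.val_add]
    simp [Nat.add_mod]

theorem cheaper_equal_load_allotment_gives_neg_cycle {D S : Type*}
    [Fintype D] [DecidableEq D] [DecidableEq S]
    (CM : D → S → ℤ) (A B : D → S)
    (hload : ∀ s : S, (Finset.univ.filter fun x => A x = s).card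
      = (Finset.univ.filter fun x => B x = s).card)
    (hcost : (∑ x : D, CM x (B x)) < ∑ x : D, CM x (A x)) :
    ∃ (m : ℕ) (d : Fin m → D) (s : Fin m → S), 0 < m ∧
      Function.Injective d ∧ (∀ i, A (d i) = s i) ∧
      (∑ i : Fin m, (CM (d i) (s (finRotate m i)) - CM (d i) (s i))) < 0 := by
  classical
  -- Step 1: build a permutation σ with A (σ x) = B x
  have fib : ∀ s : S, {x // B x = s} ≃ {x // A x = s} := fun s =>
    Fintype.equivOfCardEq (by
      rw [Fintype.card_subtype, Fintype.card_subtype]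
      exact (hload s).symm)
  obtain ⟨σ, hA⟩ : ∃ σ : Equiv.Perm D, ∀ x, A (σ x) = B x :=
    ⟨(Equiv.sigmaFiberEquiv B).symm.trans
      ((Equiv.sigmaCongrRight fib).trans (Equiv.sigmaFiberEquiv A)),
      fun x => (fib (B x) ⟨x, rfl⟩).2⟩
  set f : D → ℤ := fun x => CM x (A (σ x)) - CM x (A x) with hf
  have hsum : ∑ x : D, f x < 0 := by
    have h1 : ∑ x : D, f x = (∑ x : D, CM x (A (σ x))) - ∑ x : D, CM x (A x) :=
      Finset.sum_sub_distrib (fun x => CM x (A (σ x))) (fun x => CM x (A x))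
    have h2 : ∑ x : D, CM x (A (σ x)) = ∑ x : D, CM x (B x) := by
      simp_rw [hA]
    rw [h1, h2]
    omega
  -- Step 2: partition into cycles, pick a negative one
  have hpart := Finset.sum_partition (s := (Finset.univ : Finset D)) (f := f)
    (Equiv.Perm.SameCycle.setoid σ)
  rw [hpart] at hsum
  have hneg : ∃ xbar ∈ (Finset.univ : Finset D).image
      (Quotient.mk (Equiv.Perm.SameCycle.setoid σ)),
      (∑ y ∈ Finset.univ with ⟦y⟧ = xbar, f y) < 0 := by
    by_contra h
    push_neg at h
    exact absurd (Finset.sum_nonneg fun i hi => h i hi) (not_le.mpr hsum)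
  obtain ⟨xbar, hxbar, hlt⟩ := hneg
  obtain ⟨x0, -, rfl⟩ := Finset.mem_image.mp hxbar
  -- Step 3: the cycle through x0
  set m := Function.minimalPeriod (⇑σ) x0 with hmdef
  have hper : Function.IsPeriodicPt (⇑σ) (orderOf σ) x0 := by
    show (⇑σ)^[orderOf σ] x0 = x0
    rw [Equiv.Perm.iterate_eq_pow, pow_orderOf_eq_one]
    rfl
  have hm : 0 < m := hper.minimalPeriod_pos (orderOf_pos σ)
  have hmod : ∀ n : ℕ, (σ ^ (n % m)) x0 = (σ ^ n) x0 := by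
    intro n
    have h := Function.iterate_mod_minimalPeriod_eq (f := ⇑σ) (x := x0) (n := n)
    rw [Equiv.Perm.iterate_eq_pow, Equiv.Perm.iterate_eq_pow] at h
    exact h
  -- the orbit as an image
  have horbit : (Finset.univ.filter fun y =>
      (⟦y⟧ : Quotient (Equiv.Perm.SameCycle.setoid σ)) = ⟦x0⟧)
      = (Finset.range m).image (fun i => (σ ^ i) x0) := by
    ext y
    simp only [Finset.mem_filter, Finset.mem_image, Finset.mem_range, Finset.mem_univ,
      true_and, Quotient.eq]
    constructor
    · intro hy
      have hy' : σ.SameCycle x0 y := Equiv.Perm.SameCycle.symm hy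
      obtain ⟨i, -, hi⟩ := hy'.exists_pow_eq'
      exact ⟨i % m, Nat.mod_lt _ hm, by rw [hmod i]; exact hi⟩
    · rintro ⟨i, -, rfl⟩
      exact Equiv.Perm.SameCycle.symm ⟨(i : ℤ), by rw [zpow_natCast]⟩
  rw [horbit] at hlt
  have hinj : ∀ i ∈ Finset.range m, ∀ j ∈ Finset.range m,
      (σ ^ i) x0 = (σ ^ j) x0 → i = j := by
    intro i hi j hj hij
    exact Function.iterate_injOn_Iio_minimalPeriod
      (Finset.mem_range.mp hi) (Finset.mem_range.mp hj)
      (by simpa [Equiv.Perm.iterate_eq_pow] using hij)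
  rw [Finset.sum_image hinj] at hlt
  -- Step 4: assemble the answer
  refine ⟨m, fun i => (σ ^ (i : ℕ)) x0, fun i => A ((σ ^ (i : ℕ)) x0), hm, ?_, fun i => rfl, ?_⟩
  · intro i j hij
    exact Fin.ext (Function.iterate_injOn_Iio_minimalPeriod i.isLt j.isLt
      (by simpa [Equiv.Perm.iterate_eq_pow] using hij))
  · have key : ∀ i : Fin m, (σ ^ ((finRotate m i : Fin m) : ℕ)) x0 = σ ((σ ^ (i : ℕ)) x0) := by
      intro i
      rw [finRotate_val_aux, hmod, pow_succ', Equiv.Perm.mul_apply]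
    calc (∑ i : Fin m, (CM ((σ ^ (i : ℕ)) x0) (A ((σ ^ ((finRotate m i : Fin m) : ℕ)) x0))
          - CM ((σ ^ (i : ℕ)) x0) (A ((σ ^ (i : ℕ)) x0))))
        = ∑ i : Fin m, f ((σ ^ (i : ℕ)) x0) := by
          refine Finset.sum_congr rfl fun i _ => ?_
          rw [key i, hf]
      _ = ∑ i ∈ Finset.range m, f ((σ ^ i) x0) :=
          Fin.sum_univ_eq_sum_range (fun j => f ((σ ^ j) x0)) m
      _ < 0 := hlt
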